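/- Let X_1, …, X_n (n ≥ 2) be mutually independent nonnegative regular random variables with ex ante optimal revenue OPT > 0. Suppose that for every i the price at quantile 1/4 satisfies v_{X_i}(1/4) < OPT/2. Then the expected second-highest value among X_1, …, X_n (i.e., the revenue of the second-price auction without any duplicate) is at least OPT/40. -/

import Mathlib

open MeasureTheory ProbabilityTheory

/-- The price of `X` at quantile `q`: `v_X(q) = inf {t ≥ 0 : P(X > t) ≤ q}`. -/
noncomputable def price {Ω : Type*} [MeasurableSpace Ω] (μ : Measure Ω) (X : Ω → ℝ)
    (q : ℝ) : ℝ :=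
  sInf {t : ℝ | 0 ≤ t ∧ (μ {ω | t < X ω}).toReal ≤ q}

/-- The revenue curve of `X`: `R_X(q) = q · v_X(q)`. -/
noncomputable def revCurve {Ω : Type*} [MeasurableSpace Ω] (μ : Measure Ω) (X : Ω → ℝ)
    (q : ℝ) : ℝ :=
  q * price μ X q

/-- The second-highest value of a finite family of reals: `max_{i ≠ j} min (x i) (x j)`. -/
noncomputable def secondHighest {I : Type*} (x : I → ℝ) : ℝ :=
  ⨆ p : {p : I × I // p.1 ≠ p.2}, min (x p.1.1) (x p.1.2)

set_option linter.unusedSectionVars false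

section Aux

variable {Ω : Type*} [MeasurableSpace Ω] {μ : Measure Ω} [IsProbabilityMeasure μ] {X : Ω → ℝ}

lemma price_nonneg (μ : Measure Ω) (X : Ω → ℝ) (q : ℝ) : 0 ≤ price μ X q :=
  Real.sInf_nonneg fun _ ht => ht.1

lemma priceSet_nonempty (hX : Measurable X) {q : ℝ} (hq : 0 < q) :
    Set.Nonempty {t : ℝ | 0 ≤ t ∧ (μ {ω | t < X ω}).toReal ≤ q} := by
  have hA : ∀ m : ℕ, NullMeasurableSet {ω | (m : ℝ) < X ω} μ := fun m =>
    (measurableSet_lt measurable_const hX).nullMeasurableSet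
  have hanti : Antitone (fun m : ℕ => {ω | (m : ℝ) < X ω}) := by
    intro a b hab ω hω
    simp only [Set.mem_setOf_eq] at hω ⊢
    exact lt_of_le_of_lt (show (a:ℝ) ≤ b by exact_mod_cast hab) hω
  have hint : ⋂ m : ℕ, {ω | (m : ℝ) < X ω} = ∅ := by
    ext ω
    simp only [Set.mem_iInter, Set.mem_setOf_eq, Set.mem_empty_iff_false, iff_false, not_forall,
      not_lt]
    obtain ⟨m, hm⟩ := exists_nat_gt (X ω)
    exact ⟨m, hm.le⟩
  have htd := tendsto_measure_iInter_atTop hA hanti ⟨0, measure_ne_top μ _⟩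
  rw [hint, measure_empty] at htd
  have hev : ∀ᶠ m : ℕ in Filter.atTop, μ {ω | (m : ℝ) < X ω} < ENNReal.ofReal q :=
    htd.eventually_lt_const (ENNReal.ofReal_pos.2 hq)
  obtain ⟨m, hm⟩ := hev.exists
  refine ⟨m, Nat.cast_nonneg m, ?_⟩
  calc (μ {ω | (m : ℝ) < X ω}).toReal ≤ (ENNReal.ofReal q).toReal :=
        ENNReal.toReal_mono ENNReal.ofReal_ne_top hm.le
    _ = q := ENNReal.toReal_ofReal hq.le

lemma price_le {t q : ℝ} (h0 : 0 ≤ t) (h : (μ {ω | t < X ω}).toReal ≤ q) :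
    price μ X q ≤ t :=
  csInf_le ⟨0, fun _ hx => hx.1⟩ ⟨h0, h⟩

lemma lt_price_meas {t q : ℝ} (h0 : 0 ≤ t) (ht : t < price μ X q) :
    q < (μ {ω | t < X ω}).toReal := by
  by_contra h
  push_neg at h
  exact absurd (price_le h0 h) (not_le.2 ht)

lemma meas_ge_of_le_price (hX : Measurable X) {q θ : ℝ} (hq0 : 0 ≤ q) (hθ : 0 < θ)
    (hle : θ ≤ price μ X q) : q ≤ (μ {ω | θ ≤ X ω}).toReal := by
  set A : ℕ → Set Ω := fun m => {ω | θ - θ / (m + 1) < X ω} with hA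
  have hmeasA : ∀ m, NullMeasurableSet (A m) μ := fun m =>
    (measurableSet_lt measurable_const hX).nullMeasurableSet
  have hanti : Antitone A := by
    intro a b hab ω hω
    simp only [hA, Set.mem_setOf_eq] at hω ⊢
    have h1 : θ / (b + 1) ≤ θ / (a + 1) := by
      apply div_le_div_of_nonneg_left hθ.le (by positivity)
      have := (Nat.cast_le (α := ℝ)).2 hab; linarith
    linarith
  have hInt : ⋂ m, A m = {ω | θ ≤ X ω} := by
    ext ω
    simp only [Set.mem_iInter, hA, Set.mem_setOf_eq]
    constructor
    · intro h
      by_contra hc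
      push_neg at hc
      obtain ⟨m, hm⟩ := exists_nat_gt (θ / (θ - X ω))
      have hpos : 0 < θ - X ω := by linarith
      have h2 : θ / (θ - X ω) < m + 1 := lt_of_lt_of_le hm (by linarith)
      have h3 : θ / (m + 1) < θ - X ω := by
        rw [div_lt_iff₀ (by positivity)]
        rw [div_lt_iff₀ hpos] at h2
        linarith [mul_comm (θ - X ω) ((m : ℝ) + 1)]
      have := h m
      linarith
    · intro h m
      have : 0 < θ / (m + 1) := by positivity
      linarith
  have htd := tendsto_measure_iInter_atTop hmeasA hanti ⟨0, measure_ne_top μ _⟩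
  rw [hInt] at htd
  have hlb : ∀ m, ENNReal.ofReal q ≤ μ (A m) := by
    intro m
    have h1 : (0 : ℝ) ≤ θ - θ / (m + 1) := by
      have : θ / (m + 1) ≤ θ / 1 := by
        apply div_le_div_of_nonneg_left hθ.le one_pos
        exact_mod_cast le_add_of_nonneg_left (Nat.cast_nonneg m)
      simp only [div_one] at this
      linarith
    have hd : 0 < θ / ((m:ℝ) + 1) := by positivity
    have h2 : θ - θ / (m + 1) < price μ X q := lt_of_lt_of_le (by linarith) hle
    exact ENNReal.ofReal_le_of_le_toReal (lt_price_meas h1 h2).le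
  have hfin := ge_of_tendsto' htd hlb
  calc q = (ENNReal.ofReal q).toReal := (ENNReal.toReal_ofReal hq0).symm
    _ ≤ (μ {ω | θ ≤ X ω}).toReal := ENNReal.toReal_mono (measure_ne_top μ _) hfin

lemma price_one' : price μ X 1 = 0 := by
  have h : {t : ℝ | 0 ≤ t ∧ (μ {ω | t < X ω}).toReal ≤ 1} = Set.Ici 0 := by
    ext t
    simp only [Set.mem_setOf_eq, Set.mem_Ici, and_iff_left_iff_imp]
    intro _
    calc (μ {ω | t < X ω}).toReal ≤ (1 : ENNReal).toReal :=
          ENNReal.toReal_mono ENNReal.one_ne_top prob_le_one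
      _ = 1 := by simp
  unfold price
  rw [h]
  exact csInf_Ici

lemma revCurve_one' : revCurve μ X 1 = 0 := by
  rw [revCurve, price_one', mul_zero]

lemma revCurve_chord (hreg : ConcaveOn ℝ (Set.Icc (0:ℝ) 1) (revCurve μ X))
    {a b : ℝ} (h0 : 0 ≤ a) (hab : a ≤ b) (hb : b ≤ 1) (ha1 : a < 1) :
    (1 - b) / (1 - a) * revCurve μ X a ≤ revCurve μ X b := by
  set l : ℝ := (1 - b) / (1 - a) with hl
  have hden : 0 < 1 - a := by linarith
  have hl0 : 0 ≤ l := div_nonneg (by linarith) hden.le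
  have hl1 : 0 ≤ 1 - l := by
    rw [hl, sub_nonneg, div_le_one hden]
    linarith
  have hmema : a ∈ Set.Icc (0:ℝ) 1 := ⟨h0, le_trans hab hb⟩
  have hmem1 : (1:ℝ) ∈ Set.Icc (0:ℝ) 1 := ⟨zero_le_one, le_rfl⟩
  have key := hreg.2 hmema hmem1 hl0 hl1 (by ring)
  have harg : l * a + (1 - l) * 1 = b := by
    have hlm : l * (1 - a) = 1 - b := by rw [hl]; exact div_mul_cancel₀ _ hden.ne'
    linear_combination -hlm
  simp only [smul_eq_mul] at key
  rw [harg] at key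
  rw [revCurve_one'] at key
  linarith

end Aux

lemma prod_div_le_div_sum {ι : Type*} (A : Finset ι) (f : ι → ℝ) (θ : ℝ) (hθ : 0 < θ)
    (hf : ∀ i ∈ A, 0 ≤ f i) :
    ∏ i ∈ A, (θ / (θ + f i)) ≤ θ / (θ + ∑ i ∈ A, f i) := by
  classical
  induction A using Finset.induction with
  | empty => simp [div_self hθ.ne']
  | insert a A hnotmem ih =>
    have hfa : 0 ≤ f a := hf a (Finset.mem_insert_self a A)
    have hsum : 0 ≤ ∑ i ∈ A, f i :=
      Finset.sum_nonneg (fun i hi => hf i (Finset.mem_insert_of_mem hi))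
    rw [Finset.prod_insert hnotmem, Finset.sum_insert hnotmem]
    have ih' := ih (fun i hi => hf i (Finset.mem_insert_of_mem hi))
    have h1 : 0 ≤ θ / (θ + f a) := by positivity
    calc θ / (θ + f a) * ∏ i ∈ A, (θ / (θ + f i))
        ≤ θ / (θ + f a) * (θ / (θ + ∑ i ∈ A, f i)) := by
          apply mul_le_mul_of_nonneg_left ih' h1
      _ ≤ θ / (θ + (f a + ∑ i ∈ A, f i)) := by
          rw [div_mul_div_comm, div_le_div_iff₀ (by positivity) (by positivity)]
          nlinarith [mul_nonneg hfa hsum, hθ.le]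

lemma exists_balanced_partition {n : ℕ} (s : Fin n → ℝ) (hs : ∀ i, 0 ≤ s i) (D : ℝ)
    (hD0 : 0 ≤ D) (hD : ∀ i, s i ≤ D) :
    ∃ A : Finset (Fin n),
      ((∑ i, s i) - D) / 2 ≤ ∑ i ∈ A, s i ∧
      ((∑ i, s i) - D) / 2 ≤ ∑ i ∈ Finset.univ \ A, s i := by
  classical
  set T := ∑ i, s i with hT
  have hT0 : 0 ≤ T := Finset.sum_nonneg (fun i _ => hs i)
  set P := Finset.univ.powerset.filter (fun A : Finset (Fin n) => ∑ i ∈ A, s i ≤ (T + D) / 2)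
    with hP
  have hPne : P.Nonempty := by
    refine ⟨∅, ?_⟩
    simp only [hP, Finset.mem_filter, Finset.mem_powerset, Finset.empty_subset, true_and,
      Finset.sum_empty]
    linarith
  obtain ⟨A, hAP, hAmax⟩ := P.exists_max_image (fun A => ∑ i ∈ A, s i) hPne
  have hA2 : ∑ i ∈ A, s i ≤ (T + D) / 2 := (Finset.mem_filter.1 hAP).2
  have hsd : ∑ i ∈ Finset.univ \ A, s i + ∑ i ∈ A, s i = T :=
    Finset.sum_sdiff (Finset.subset_univ A)
  have hA1 : (T - D) / 2 ≤ ∑ i ∈ A, s i := by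
    by_contra hcon
    push_neg at hcon
    have hcs : (T + D) / 2 < ∑ i ∈ Finset.univ \ A, s i := by linarith
    have hpos : 0 < ∑ i ∈ Finset.univ \ A, s i := by
      have : (0:ℝ) ≤ (T + D) / 2 := by linarith
      linarith
    obtain ⟨e, he, hse⟩ : ∃ e ∈ Finset.univ \ A, 0 < s e := by
      by_contra hno
      push_neg at hno
      have : ∑ i ∈ Finset.univ \ A, s i ≤ 0 :=
        Finset.sum_nonpos (fun i hi => hno i hi)
      linarith
    have heA : e ∉ A := (Finset.mem_sdiff.1 he).2
    have hins : insert e A ∈ P := by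
      simp only [hP, Finset.mem_filter, Finset.mem_powerset]
      refine ⟨Finset.subset_univ _, ?_⟩
      rw [Finset.sum_insert heA]
      have := hD e
      linarith
    have hmax := hAmax _ hins
    rw [Finset.sum_insert heA] at hmax
    linarith
  exact ⟨A, hA1, by linarith⟩

set_option maxHeartbeats 1600000 in
/-- **The second-price auction without duplicates is a 40-approximation when all prices at
quantile `1/4` are below `OPT/2`.** Here `X 0, …, X (n-1)` are independent nonnegative
regular random variables, `OPT > 0` is their ex ante optimal revenue, and the conclusion
says the expected second-highest value is at least `OPT/40`. -/
theorem stmt_1 {Ω : Type*} [MeasurableSpace Ω] (μ : Measure Ω) [IsProbabilityMeasure μ]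
    (n : ℕ) (hn : 2 ≤ n) (X : Fin n → Ω → ℝ)
    (hmeas : ∀ i, Measurable (X i))
    (hnn : ∀ i ω, 0 ≤ X i ω)
    (hindep : iIndepFun X μ)
    (hreg : ∀ i, ConcaveOn ℝ (Set.Icc (0:ℝ) 1) (revCurve μ (X i)))
    (OPT : ℝ) (hOPTpos : 0 < OPT)
    (hOPT : OPT = sSup {r : ℝ | ∃ q : Fin n → ℝ,
      (∀ i, q i ∈ Set.Icc (0:ℝ) 1) ∧ (∑ i, q i ≤ 1) ∧ r = ∑ i, revCurve μ (X i) (q i)})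
    (hlow : ∀ i, price μ (X i) (1/4) < OPT / 2) :
    OPT / 40 ≤ ∫ ω, secondHighest (fun i => X i ω) ∂μ := by
  classical
  set Sset := {r : ℝ | ∃ q : Fin n → ℝ,
      (∀ i, q i ∈ Set.Icc (0:ℝ) 1) ∧ (∑ i, q i ≤ 1) ∧ r = ∑ i, revCurve μ (X i) (q i)}
    with hSset
  -- the set is nonempty and bounded above
  have hzero : (0:ℝ) ∈ Sset := by
    refine ⟨fun _ => 0, fun i => ⟨le_rfl, zero_le_one⟩, by simp, ?_⟩
    simp [revCurve]
  have hSne : Sset.Nonempty := ⟨0, hzero⟩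
  have hSbdd : BddAbove Sset := by
    by_contra hnb
    have := hOPTpos
    rw [hOPT, Real.sSup_of_not_bddAbove hnb] at this
    exact lt_irrefl 0 this
  -- single-bidder revenue is at most OPT
  have hRle : ∀ i, ∀ q : ℝ, 0 ≤ q → q ≤ 1 → revCurve μ (X i) q ≤ OPT := by
    intro i q h0 h1
    rw [hOPT]
    apply le_csSup hSbdd
    refine ⟨fun j => if j = i then q else 0, ?_, ?_, ?_⟩
    · intro j
      by_cases h : j = i <;> simp [h, Set.mem_Icc, h0, h1]
    · rw [Finset.sum_ite_eq' Finset.univ i (fun _ => q)]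
      simp [h1]
    · rw [Finset.sum_eq_single i]
      · simp
      · intro j _ hj
        simp [hj, revCurve]
      · intro h
        exact absurd (Finset.mem_univ i) h
  -- a near-optimal feasible quantile vector
  obtain ⟨r, hrS, hr99⟩ := exists_lt_of_lt_csSup hSne
    (show (99/100 : ℝ) * OPT < sSup Sset by rw [← hOPT]; linarith)
  obtain ⟨qv, hq01, hqsum, hrdef⟩ := hrS
  subst hrdef
  set s : Fin n → ℝ := fun i => revCurve μ (X i) (qv i) with hs_def
  set v : Fin n → ℝ := fun i => price μ (X i) (qv i) with hv_def
  have hq0 : ∀ i, 0 ≤ qv i := fun i => (hq01 i).1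
  have hq1 : ∀ i, qv i ≤ 1 := fun i => (hq01 i).2
  have hv0 : ∀ i, 0 ≤ v i := fun i => price_nonneg μ (X i) (qv i)
  have hs0 : ∀ i, 0 ≤ s i := fun i => mul_nonneg (hq0 i) (hv0 i)
  have hsv : ∀ i, s i ≤ v i := by
    intro i
    have : qv i * v i ≤ 1 * v i := mul_le_mul_of_nonneg_right (hq1 i) (hv0 i)
    simpa [hs_def, revCurve] using this
  have hsum : 99/100 * OPT < ∑ i, s i := hr99
  -- each bidder's contribution is below OPT/2
  have hshalf : ∀ i, s i < OPT / 2 := by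
    intro i
    rcases le_or_gt (1/4 : ℝ) (qv i) with h | h
    · have hmono : price μ (X i) (qv i) ≤ price μ (X i) (1/4) := by
        apply csInf_le_csInf ⟨0, fun x hx => hx.1⟩ (priceSet_nonempty (hmeas i) (by norm_num))
        intro t ht
        exact ⟨ht.1, le_trans ht.2 h⟩
      have h1 : s i ≤ v i := hsv i
      have h2 : v i ≤ price μ (X i) (1/4) := hmono
      have h3 := hlow i
      linarith
    · have hch := revCurve_chord (hreg i) (hq0 i) h.le (by norm_num)
        (lt_of_lt_of_le h (by norm_num))
      -- (1 - 1/4)/(1 - qv i) * s i ≤ revCurve (1/4)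
      have h34 : (3/4 : ℝ) * s i ≤ (1 - 1/4) / (1 - qv i) * s i := by
        apply mul_le_mul_of_nonneg_right _ (hs0 i)
        rw [le_div_iff₀ (by linarith)]
        nlinarith [hq0 i]
      have hR4 : revCurve μ (X i) (1/4) = 1/4 * price μ (X i) (1/4) := rfl
      have h5 := hlow i
      have h6 : (3/4:ℝ) * s i ≤ 1/4 * price μ (X i) (1/4) := by
        rw [← hR4]
        exact le_trans h34 hch
      linarith [hOPTpos]
  -- KEY: probability of exceeding a threshold below the price
  have hKEY : ∀ i, ∀ θ : ℝ, 0 < θ → θ ≤ v i →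
      s i / (θ + s i) ≤ (μ {ω | θ ≤ X i ω}).toReal := by
    intro i θ hθ hθv
    rcases eq_or_lt_of_le (hs0 i) with h0 | hspos
    · rw [← h0]
      simp only [zero_div]
      exact ENNReal.toReal_nonneg
    · set q' : ℝ := s i / (θ + s i) with hq'
      have hq'0 : 0 < q' := div_pos hspos (by linarith)
      have hq'1 : q' < 1 := by
        rw [hq', div_lt_one (by linarith)]
        linarith
      have hqv_pos : 0 < qv i := by
        rcases eq_or_lt_of_le (hq0 i) with h | h
        · exfalso
          have : s i = 0 := by rw [hs_def]; simp [revCurve, ← h]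
          linarith
        · exact h
      rcases le_or_gt q' (qv i) with hle | hlt
      · have := meas_ge_of_le_price (hmeas i) (hq0 i) hθ hθv
        linarith
      · have hch := revCurve_chord (hreg i) (hq0 i) hlt.le hq'1.le
          (lt_trans hlt hq'1)
        have h2 : (1 - q') * s i ≤ revCurve μ (X i) q' := by
          refine le_trans ?_ hch
          apply mul_le_mul_of_nonneg_right _ (hs0 i)
          rw [le_div_iff₀ (by linarith [hq1 i])]
          nlinarith [hq0 i]
        have halg : (1 - q') * s i = θ * q' := by
          have hne : θ + s i ≠ 0 := ne_of_gt (by linarith)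
          rw [hq']
          field_simp
          ring
        have hpq' : θ ≤ price μ (X i) q' := by
          have hRq' : revCurve μ (X i) q' = q' * price μ (X i) q' := rfl
          rw [hRq', halg] at h2
          exact le_of_mul_le_mul_left (by linarith [mul_comm θ q', mul_comm q' (price μ (X i) q')]) hq'0
        exact meas_ge_of_le_price (hmeas i) hq'0.le hθ hpq'
  -- the "failure" probabilities
  set F : ℝ → Fin n → ℝ := fun θ i => (μ {ω | X i ω < θ}).toReal with hF_def
  have hF0 : ∀ θ i, 0 ≤ F θ i := fun θ i => ENNReal.toReal_nonneg
  have hF1 : ∀ θ i, F θ i ≤ 1 := by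
    intro θ i
    calc (μ {ω | X i ω < θ}).toReal ≤ (1 : ENNReal).toReal :=
          ENNReal.toReal_mono ENNReal.one_ne_top prob_le_one
      _ = 1 := by simp
  have hFcompl : ∀ θ i, F θ i = 1 - (μ {ω | θ ≤ X i ω}).toReal := by
    intro θ i
    have hms : MeasurableSet {ω | θ ≤ X i ω} := measurableSet_le measurable_const (hmeas i)
    have h := measure_add_measure_compl (μ := μ) hms
    have hc : {ω | θ ≤ X i ω}ᶜ = {ω | X i ω < θ} := by
      ext ω
      simp [not_le]
    rw [hc, measure_univ] at h
    have := congrArg ENNReal.toReal h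
    rw [ENNReal.toReal_add (measure_ne_top μ _) (measure_ne_top μ _)] at this
    simp only [ENNReal.toReal_one] at this
    rw [hF_def]
    simp only
    linarith
  -- product bound for a group
  have hProd : ∀ (A : Finset (Fin n)) (θ : ℝ), 0 < θ →
      ∏ i ∈ A, F θ i ≤ θ / (θ + ∑ i ∈ A.filter (fun i => θ ≤ v i), s i) := by
    intro A θ hθ
    have hsplit := Finset.prod_filter_mul_prod_filter_not A (fun i => θ ≤ v i) (F θ)
    have h1 : ∏ i ∈ A.filter (fun i => ¬ θ ≤ v i), F θ i ≤ 1 :=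
      Finset.prod_le_one (fun i _ => hF0 θ i) (fun i _ => hF1 θ i)
    have h0 : 0 ≤ ∏ i ∈ A.filter (fun i => θ ≤ v i), F θ i :=
      Finset.prod_nonneg (fun i _ => hF0 θ i)
    have step1 : ∏ i ∈ A, F θ i ≤ ∏ i ∈ A.filter (fun i => θ ≤ v i), F θ i := by
      rw [← hsplit]
      exact mul_le_of_le_one_right h0 h1
    have step2 : ∏ i ∈ A.filter (fun i => θ ≤ v i), F θ i ≤
        ∏ i ∈ A.filter (fun i => θ ≤ v i), (θ / (θ + s i)) := by
      apply Finset.prod_le_prod (fun i _ => hF0 θ i)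
      intro i hi
      have hvi : θ ≤ v i := (Finset.mem_filter.1 hi).2
      have hk := hKEY i θ hθ hvi
      rw [hFcompl θ i]
      have hne : θ + s i ≠ 0 := ne_of_gt (by have := hs0 i; linarith)
      have : 1 - s i / (θ + s i) = θ / (θ + s i) := by
        field_simp
        ring
      linarith
    have step3 := prod_div_le_div_sum (A.filter (fun i => θ ≤ v i)) s θ hθ (fun i _ => hs0 i)
    exact le_trans (le_trans step1 step2) step3
  -- hence a lower bound on success probability of a group
  have hOne : ∀ (A : Finset (Fin n)) (θ τ : ℝ), 0 < θ → 0 ≤ τ →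
      τ ≤ ∑ i ∈ A.filter (fun i => θ ≤ v i), s i →
      τ / (τ + θ) ≤ 1 - ∏ i ∈ A, F θ i := by
    intro A θ τ hθ hτ0 hτ
    have h := hProd A θ hθ
    have h2 : θ / (θ + ∑ i ∈ A.filter (fun i => θ ≤ v i), s i) ≤ θ / (θ + τ) := by
      rw [div_le_div_iff₀ (by linarith) (by linarith)]
      nlinarith
    have hne2 : θ + τ ≠ 0 := ne_of_gt (by linarith)
    have hne3 : τ + θ ≠ 0 := ne_of_gt (by linarith)
    have h3 : θ / (θ + τ) + τ / (θ + τ) = 1 := by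
      rw [← add_div, div_self hne2]
    have h4 : ∏ i ∈ A, F θ i ≤ θ / (θ + τ) := le_trans h h2
    have h5 : τ / (τ + θ) = τ / (θ + τ) := by rw [add_comm]
    rw [h5]
    linarith
  -- lower bound on group revenue-weight above a threshold
  have hTau : ∀ (A : Finset (Fin n)) (θ : ℝ), 0 ≤ θ →
      (∑ i ∈ A, s i) - θ * (∑ i ∈ A, qv i) ≤ ∑ i ∈ A.filter (fun i => θ ≤ v i), s i := by
    intro A θ hθ
    have hsplit := Finset.sum_filter_add_sum_filter_not A (fun i => θ ≤ v i) s
    have hb : ∑ i ∈ A.filter (fun i => ¬ θ ≤ v i), s i ≤ θ * ∑ i ∈ A, qv i := by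
      calc ∑ i ∈ A.filter (fun i => ¬ θ ≤ v i), s i
          ≤ ∑ i ∈ A.filter (fun i => ¬ θ ≤ v i), θ * qv i := by
            apply Finset.sum_le_sum
            intro i hi
            have hvi : v i < θ := by
              have := (Finset.mem_filter.1 hi).2
              push_neg at this
              exact this
            have : qv i * v i ≤ qv i * θ := mul_le_mul_of_nonneg_left hvi.le (hq0 i)
            calc s i = qv i * v i := rfl
              _ ≤ qv i * θ := this
              _ = θ * qv i := mul_comm _ _
        _ ≤ ∑ i ∈ A, θ * qv i := by
            apply Finset.sum_le_sum_of_subset_of_nonneg (Finset.filter_subset _ _)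
            intro i _ _
            exact mul_nonneg hθ (hq0 i)
        _ = θ * ∑ i ∈ A, qv i := by rw [Finset.mul_sum]
    linarith
  -- the second-highest function
  set Z : Ω → ℝ := fun ω => secondHighest (fun i => X i ω) with hZ_def
  haveI hIdxNe : Nonempty {p : Fin n × Fin n // p.1 ≠ p.2} := by
    refine ⟨⟨(⟨0, by omega⟩, ⟨1, by omega⟩), ?_⟩⟩
    simp [Prod.ext_iff, Fin.ext_iff]
  have hbdd : ∀ ω, BddAbove (Set.range fun p : {p : Fin n × Fin n // p.1 ≠ p.2} =>
      min (X p.1.1 ω) (X p.1.2 ω)) := fun ω => Set.Finite.bddAbove (Set.finite_range _)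
  have hZnn : ∀ ω, 0 ≤ Z ω := by
    intro ω
    obtain ⟨p0⟩ := hIdxNe
    refine le_trans (le_min (hnn p0.1.1 ω) (hnn p0.1.2 ω)) ?_
    exact le_ciSup (hbdd ω) p0
  -- measurability of Z
  have hZeq : ∀ ω, Z ω = Finset.univ.sup' (Finset.univ_nonempty)
      (fun p : {p : Fin n × Fin n // p.1 ≠ p.2} => min (X p.1.1 ω) (X p.1.2 ω)) := by
    intro ω
    rw [hZ_def]
    exact (Finset.sup'_univ_eq_ciSup _).symm
  have hZm : Measurable Z := by
    have hms : Measurable (Finset.univ.sup' Finset.univ_nonempty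
        (fun p : {p : Fin n × Fin n // p.1 ≠ p.2} => fun ω => min (X p.1.1 ω) (X p.1.2 ω))) :=
      Finset.measurable_sup' _ (fun p _ => (hmeas p.1.1).min (hmeas p.1.2))
    have heq2 : Z = Finset.univ.sup' Finset.univ_nonempty
        (fun p : {p : Fin n × Fin n // p.1 ≠ p.2} => fun ω => min (X p.1.1 ω) (X p.1.2 ω)) := by
      funext ω
      rw [hZeq ω, Finset.sup'_apply]
    rw [heq2]
    exact hms
  -- tail bound for each bidder
  have htail : ∀ i, ∀ t : ℝ, 0 < t → μ {ω | t < X i ω} ≤ ENNReal.ofReal (OPT / t) := by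
    intro i t ht
    set p := (μ {ω | t < X i ω}).toReal with hp
    have hp1 : p ≤ 1 := by
      calc (μ {ω | t < X i ω}).toReal ≤ (1 : ENNReal).toReal :=
            ENNReal.toReal_mono ENNReal.one_ne_top prob_le_one
        _ = 1 := by simp
    have hp0 : 0 ≤ p := ENNReal.toReal_nonneg
    have hqt : ∀ qq : ℝ, 0 < qq → qq < p → qq * t ≤ OPT := by
      intro qq hq hqp
      have hprice : t ≤ price μ (X i) qq := by
        apply le_csInf (priceSet_nonempty (hmeas i) hq)
        intro b hb
        by_contra hbt
        push_neg at hbt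
        have hsub : {ω | t < X i ω} ⊆ {ω | b < X i ω} := fun ω hω => lt_trans hbt hω
        have hmm := ENNReal.toReal_mono (measure_ne_top μ _) (measure_mono hsub)
        rw [← hp] at hmm
        linarith [hb.2]
      calc qq * t ≤ qq * price μ (X i) qq := mul_le_mul_of_nonneg_left hprice hq.le
        _ = revCurve μ (X i) qq := rfl
        _ ≤ OPT := hRle i qq hq.le (le_trans hqp.le hp1)
    have hpt : p * t ≤ OPT := by
      rcases eq_or_lt_of_le hp0 with h0 | h0
      · rw [← h0, zero_mul]
        exact hOPTpos.le
      · by_contra hc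
        push_neg at hc
        have hq2 : OPT / t < p := by
          rw [div_lt_iff₀ ht]
          linarith
        have hq0' : 0 < (OPT / t + p) / 2 := by positivity
        have hq3 : (OPT / t + p) / 2 < p := by linarith
        have := hqt _ hq0' hq3
        have h4 : OPT / t < (OPT / t + p) / 2 := by linarith
        rw [div_lt_iff₀ ht] at h4
        nlinarith
    have heq : μ {ω | t < X i ω} = ENNReal.ofReal p :=
      (ENNReal.ofReal_toReal (measure_ne_top μ _)).symm
    rw [heq]
    apply ENNReal.ofReal_le_ofReal
    rw [le_div_iff₀ ht]
    linarith
  -- independence for pairs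
  have hpair : ∀ i j, i ≠ j → ∀ t : ℝ,
      μ ({ω | t < X i ω} ∩ {ω | t < X j ω}) = μ {ω | t < X i ω} * μ {ω | t < X j ω} := by
    intro i j hij t
    have hmem : ∀ k : Fin n, k ∈ ({i, j} : Finset (Fin n)) →
        MeasurableSet[(inferInstance : MeasurableSpace ℝ).comap (X k)] {ω | t < X k ω} :=
      fun k _ => ⟨Set.Ioi t, measurableSet_Ioi, rfl⟩
    have h := hindep.meas_biInter hmem
    have h2 : (⋂ k ∈ ({i, j} : Finset (Fin n)), {ω | t < X k ω}) =
        {ω | t < X i ω} ∩ {ω | t < X j ω} := by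
      simp [Finset.set_biInter_insert, Finset.set_biInter_singleton]
    have h3 : (∏ k ∈ ({i, j} : Finset (Fin n)), μ {ω | t < X k ω}) =
        μ {ω | t < X i ω} * μ {ω | t < X j ω} := Finset.prod_pair hij
    rw [h2, h3] at h
    exact h
  -- integrability of each pair minimum
  have hminint : ∀ (i j : Fin n), i ≠ j → Integrable (fun ω => min (X i ω) (X j ω)) μ := by
    intro i j hij
    have hm : Measurable (fun ω => min (X i ω) (X j ω)) := (hmeas i).min (hmeas j)
    have hnng : 0 ≤ᵐ[μ] (fun ω => min (X i ω) (X j ω)) :=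
      Filter.Eventually.of_forall (fun ω => le_min (hnn i ω) (hnn j ω))
    refine ⟨hm.aestronglyMeasurable, ?_⟩
    rw [hasFiniteIntegral_iff_ofReal hnng]
    rw [lintegral_eq_lintegral_meas_lt μ hnng hm.aemeasurable]
    have hsplit : Set.Ioi (0:ℝ) = Set.Ioc 0 OPT ∪ Set.Ioi OPT :=
      (Set.Ioc_union_Ioi_eq_Ioi hOPTpos.le).symm
    rw [hsplit, lintegral_union measurableSet_Ioi (Set.Ioc_disjoint_Ioi le_rfl)]
    have hle1 : ∫⁻ t in Set.Ioc (0:ℝ) OPT, μ {a | t < min (X i a) (X j a)} ≤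
        ENNReal.ofReal OPT := by
      calc ∫⁻ t in Set.Ioc (0:ℝ) OPT, μ {a | t < min (X i a) (X j a)}
          ≤ ∫⁻ _ in Set.Ioc (0:ℝ) OPT, 1 := lintegral_mono (fun t => prob_le_one)
        _ = volume (Set.Ioc (0:ℝ) OPT) := setLIntegral_one _
        _ = ENNReal.ofReal OPT := by rw [Real.volume_Ioc, sub_zero]
    have hle2 : ∫⁻ t in Set.Ioi OPT, μ {a | t < min (X i a) (X j a)} ≤
        ∫⁻ t in Set.Ioi OPT, ENNReal.ofReal (OPT^2 * (t^2)⁻¹) := by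
      apply setLIntegral_mono
      · apply Measurable.ennreal_ofReal
        exact ((measurable_id.pow_const 2).inv.const_mul _)
      · intro t ht
        have ht0 : 0 < t := lt_trans hOPTpos ht
        have hset : {a | t < min (X i a) (X j a)} = {ω | t < X i ω} ∩ {ω | t < X j ω} := by
          ext ω
          simp [lt_min_iff]
        rw [hset, hpair i j hij t]
        calc μ {ω | t < X i ω} * μ {ω | t < X j ω}
            ≤ ENNReal.ofReal (OPT / t) * ENNReal.ofReal (OPT / t) :=
              mul_le_mul' (htail i t ht0) (htail j t ht0)
          _ = ENNReal.ofReal ((OPT / t) * (OPT / t)) :=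
              (ENNReal.ofReal_mul (by positivity)).symm
          _ = ENNReal.ofReal (OPT^2 * (t^2)⁻¹) := by
              congr 1
              field_simp
    have hfin2 : ∫⁻ t in Set.Ioi OPT, ENNReal.ofReal (OPT^2 * (t^2)⁻¹) < ⊤ := by
      have h0 := integrableOn_Ioi_rpow_of_lt (show (-2:ℝ) < -1 by norm_num) hOPTpos
      have h1 : IntegrableOn (fun t : ℝ => (t^2)⁻¹) (Set.Ioi OPT) volume := by
        apply h0.congr_fun _ measurableSet_Ioi
        intro t ht
        have ht0 : 0 < t := lt_trans hOPTpos ht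
        show t ^ (-2 : ℝ) = (t ^ 2)⁻¹
        rw [show (-2:ℝ) = -((2:ℕ):ℝ) by norm_num, Real.rpow_neg ht0.le, Real.rpow_natCast]
      have h2 : IntegrableOn (fun t : ℝ => OPT^2 * (t^2)⁻¹) (Set.Ioi OPT) volume :=
        h1.const_mul _
      exact h2.setLIntegral_lt_top
    calc (∫⁻ t in Set.Ioc (0:ℝ) OPT, μ {a | t < min (X i a) (X j a)}) +
        ∫⁻ t in Set.Ioi OPT, μ {a | t < min (X i a) (X j a)}
        ≤ ENNReal.ofReal OPT + ∫⁻ t in Set.Ioi OPT, ENNReal.ofReal (OPT^2 * (t^2)⁻¹) :=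
          add_le_add hle1 hle2
      _ < ⊤ := ENNReal.add_lt_top.2 ⟨ENNReal.ofReal_lt_top, hfin2⟩
  -- integrability of Z
  have hZint : Integrable Z μ := by
    have hC : Integrable (fun ω => ∑ p : {p : Fin n × Fin n // p.1 ≠ p.2},
        min (X p.1.1 ω) (X p.1.2 ω)) μ :=
      integrable_finset_sum _ (fun p _ => hminint p.1.1 p.1.2 p.2)
    apply hC.mono' hZm.aestronglyMeasurable
    filter_upwards with ω
    rw [Real.norm_of_nonneg (hZnn ω)]
    apply ciSup_le
    intro p
    exact Finset.single_le_sum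
      (fun q _ => le_min (hnn q.1.1 ω) (hnn q.1.2 ω)) (Finset.mem_univ p)
  -- main lower bound via two disjoint groups
  have hMain : ∀ (A B : Finset (Fin n)), Disjoint A B → ∀ θ a b : ℝ, 0 < θ → 0 ≤ a → 0 ≤ b →
      a ≤ 1 - ∏ i ∈ A, F θ i → b ≤ 1 - ∏ i ∈ B, F θ i →
      θ * (a * b) ≤ ∫ ω, Z ω ∂μ := by
    intro A B hAB θ a b hθ ha0 hb0 ha hb
    set SA := ⋂ i ∈ A, {ω | X i ω < θ} with hSA_def
    set SB := ⋂ i ∈ B, {ω | X i ω < θ} with hSB_def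
    have hmsets : ∀ i : Fin n, MeasurableSet {ω | X i ω < θ} :=
      fun i => measurableSet_lt (hmeas i) measurable_const
    have hSAm : MeasurableSet SA :=
      MeasurableSet.biInter (Finset.countable_toSet A) (fun i _ => hmsets i)
    have hSBm : MeasurableSet SB :=
      MeasurableSet.biInter (Finset.countable_toSet B) (fun i _ => hmsets i)
    have hcomap : ∀ (C : Finset (Fin n)), ∀ k ∈ C,
        MeasurableSet[(inferInstance : MeasurableSpace ℝ).comap (X k)] {ω | X k ω < θ} :=
      fun C k _ => ⟨Set.Iio θ, measurableSet_Iio, rfl⟩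
    have hμSA : μ SA = ∏ i ∈ A, μ {ω | X i ω < θ} := hindep.meas_biInter (hcomap A)
    have hμSB : μ SB = ∏ i ∈ B, μ {ω | X i ω < θ} := hindep.meas_biInter (hcomap B)
    have hinter : SA ∩ SB = ⋂ i ∈ (A ∪ B), {ω | X i ω < θ} := by
      rw [hSA_def, hSB_def]
      ext ω
      simp only [Set.mem_inter_iff, Set.mem_iInter, Finset.mem_union]
      constructor
      · rintro ⟨h1, h2⟩ i hi
        rcases hi with hi | hi
        · exact h1 i hi
        · exact h2 i hi
      · intro h
        exact ⟨fun i hi => h i (Or.inl hi), fun i hi => h i (Or.inr hi)⟩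
    have hμAB : μ (SA ∩ SB) = μ SA * μ SB := by
      rw [hinter, hindep.meas_biInter (hcomap (A ∪ B)), Finset.prod_union hAB, ← hμSA, ← hμSB]
    set E := (SA ∪ SB)ᶜ with hE_def
    have hEm : MeasurableSet E := (hSAm.union hSBm).compl
    -- compute (μ E).toReal
    have hprodA : (μ SA).toReal = ∏ i ∈ A, F θ i := by
      rw [hμSA, ENNReal.toReal_prod]
    have hprodB : (μ SB).toReal = ∏ i ∈ B, F θ i := by
      rw [hμSB, ENNReal.toReal_prod]
    have h1 : μ (SA ∪ SB) + μ ((SA ∪ SB)ᶜ) = 1 := by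
      rw [measure_add_measure_compl (hSAm.union hSBm), measure_univ]
    have h2 : μ (SA ∪ SB) + μ (SA ∩ SB) = μ SA + μ SB := measure_union_add_inter SA hSBm
    have h1' := congrArg ENNReal.toReal h1
    have h2' := congrArg ENNReal.toReal h2
    rw [ENNReal.toReal_add (measure_ne_top μ _) (measure_ne_top μ _)] at h1' h2'
    rw [ENNReal.toReal_add (measure_ne_top μ _) (measure_ne_top μ _)] at h2'
    simp only [ENNReal.toReal_one] at h1'
    have h3' : (μ (SA ∩ SB)).toReal = (μ SA).toReal * (μ SB).toReal := by
      rw [hμAB, ENNReal.toReal_mul]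
    have hμE : (μ E).toReal = (1 - ∏ i ∈ A, F θ i) * (1 - ∏ i ∈ B, F θ i) := by
      rw [hE_def]
      rw [← hprodA, ← hprodB]
      nlinarith [h1', h2', h3']
    -- on E the second-highest value is at least θ
    have hsub : ∀ ω, ω ∈ E → θ ≤ Z ω := by
      intro ω hω
      rw [hE_def] at hω
      simp only [Set.mem_compl_iff, Set.mem_union, not_or] at hω
      obtain ⟨hA', hB'⟩ := hω
      have hexA : ∃ i ∈ A, θ ≤ X i ω := by
        by_contra hno
        push_neg at hno
        exact hA' (Set.mem_biInter (fun i hi => hno i hi))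
      have hexB : ∃ j ∈ B, θ ≤ X j ω := by
        by_contra hno
        push_neg at hno
        exact hB' (Set.mem_biInter (fun j hj => hno j hj))
      obtain ⟨i, hiA, hi⟩ := hexA
      obtain ⟨j, hjB, hj⟩ := hexB
      have hij : i ≠ j := by
        intro h
        exact (Finset.disjoint_left.1 hAB hiA) (h ▸ hjB)
      refine le_trans (le_min hi hj) ?_
      exact le_ciSup (hbdd ω) ⟨(i, j), hij⟩
    have hind : ∀ ω, E.indicator (fun _ => θ) ω ≤ Z ω := by
      intro ω
      by_cases hω : ω ∈ E
      · rw [Set.indicator_of_mem hω]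
        exact hsub ω hω
      · rw [Set.indicator_of_notMem hω]
        exact hZnn ω
    have hiint : Integrable (E.indicator fun _ => θ) μ := (integrable_const θ).indicator hEm
    have hint := integral_mono hiint hZint hind
    rw [integral_indicator_const θ hEm] at hint
    have hab : a * b ≤ (1 - ∏ i ∈ A, F θ i) * (1 - ∏ i ∈ B, F θ i) :=
      mul_le_mul ha hb hb0 (le_trans ha0 ha)
    calc θ * (a * b) ≤ θ * ((1 - ∏ i ∈ A, F θ i) * (1 - ∏ i ∈ B, F θ i)) :=
          mul_le_mul_of_nonneg_left hab hθ.le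
      _ = (μ E).toReal • θ := by rw [hμE, smul_eq_mul]; ring
      _ ≤ ∫ ω, Z ω ∂μ := hint
  -- now the case analysis
  have hgoal : OPT / 40 ≤ ∫ ω, Z ω ∂μ := by
    rcases Classical.em (∃ i, 3/20 * OPT ≤ s i) with ⟨i0, hi0⟩ | hno
    · -- Case 1: a dominant bidder
      set θ := 3/20 * OPT with hθ_def
      have hθ : 0 < θ := by rw [hθ_def]; linarith
      set B := Finset.univ.erase i0 with hB_def
      have hAB : Disjoint ({i0} : Finset (Fin n)) B := by
        rw [Finset.disjoint_singleton_left, hB_def]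
        exact Finset.notMem_erase i0 _
      -- bidder i0 succeeds with probability at least 1/2
      have hfilA : θ ≤ ∑ i ∈ ({i0} : Finset (Fin n)).filter (fun i => θ ≤ v i), s i := by
        have hv_i0 : θ ≤ v i0 := le_trans hi0 (hsv i0)
        rw [Finset.filter_singleton, if_pos hv_i0, Finset.sum_singleton]
        exact hi0
      have ha : (1/2 : ℝ) ≤ 1 - ∏ i ∈ ({i0} : Finset (Fin n)), F θ i := by
        have := hOne {i0} θ θ hθ hθ.le hfilA
        have heq : θ / (θ + θ) = 1/2 := by
          rw [div_eq_iff (by linarith)]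
          ring
        linarith
      -- the rest succeed with probability at least 34/49
      set τ := 17/50 * OPT with hτ_def
      have hτpos : 0 < τ := by rw [hτ_def]; linarith
      have hsB : ∑ i ∈ B, s i + s i0 = ∑ i, s i := by
        rw [hB_def]
        exact Finset.sum_erase_add _ _ (Finset.mem_univ i0)
      have hqB : ∑ i ∈ B, qv i ≤ 1 := by
        refine le_trans ?_ hqsum
        apply Finset.sum_le_sum_of_subset_of_nonneg (Finset.erase_subset _ _)
        intro i _ _
        exact hq0 i
      have hτle : τ ≤ ∑ i ∈ B.filter (fun i => θ ≤ v i), s i := by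
        refine le_trans ?_ (hTau B θ hθ.le)
        have h1 := hshalf i0
        have h2 : θ * (∑ i ∈ B, qv i) ≤ θ * 1 :=
          mul_le_mul_of_nonneg_left hqB hθ.le
        rw [hτ_def, hθ_def]
        rw [hθ_def] at h2
        linarith
      have hb : (34/49 : ℝ) ≤ 1 - ∏ i ∈ B, F θ i := by
        have := hOne B θ τ hθ hτpos.le hτle
        have heq : τ / (τ + θ) = 34/49 := by
          rw [hτ_def, hθ_def, div_eq_iff (by linarith)]
          ring
        linarith
      have := hMain {i0} B hAB θ (1/2) (34/49) hθ (by norm_num) (by norm_num) ha hb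
      have hfin : OPT / 40 ≤ θ * (1/2 * (34/49)) := by
        rw [hθ_def]
        linarith
      linarith
    · -- Case 2: all bidders are small; split into two balanced groups
      push_neg at hno
      obtain ⟨A, hA1, hA2⟩ := exists_balanced_partition s hs0 (3/20 * OPT)
        (by linarith) (fun i => (hno i).le)
      set θ := 21/100 * OPT with hθ_def
      have hθ : 0 < θ := by rw [hθ_def]; linarith
      set B := Finset.univ \ A with hB_def
      have hAB : Disjoint A B := by
        rw [hB_def]
        exact Finset.disjoint_sdiff
      set γA := ∑ i ∈ A, qv i with hγA_def
      set γB := ∑ i ∈ B, qv i with hγB_def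
      have hγA0 : 0 ≤ γA := Finset.sum_nonneg (fun i _ => hq0 i)
      have hγB0 : 0 ≤ γB := Finset.sum_nonneg (fun i _ => hq0 i)
      have hγ : γA + γB ≤ 1 := by
        have := Finset.sum_sdiff (f := qv) (Finset.subset_univ A)
        rw [hγA_def, hγB_def, hB_def]
        linarith [hqsum]
      have hγA1 : γA ≤ 1 := by linarith
      have hγB1 : γB ≤ 1 := by linarith
      -- both groups have ex ante weight at least 2θ
      have hSA2 : 2 * θ ≤ ∑ i ∈ A, s i := by
        rw [hθ_def]
        have : ((∑ i, s i) - 3/20 * OPT) / 2 ≤ ∑ i ∈ A, s i := hA1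
        linarith
      have hSB2 : 2 * θ ≤ ∑ i ∈ B, s i := by
        rw [hθ_def, hB_def]
        have : ((∑ i, s i) - 3/20 * OPT) / 2 ≤ ∑ i ∈ Finset.univ \ A, s i := hA2
        linarith
      -- success probabilities
      have haux : ∀ (C : Finset (Fin n)) (γ : ℝ), γ = ∑ i ∈ C, qv i → 0 ≤ γ → γ ≤ 1 →
          2 * θ ≤ ∑ i ∈ C, s i →
          (2 - γ) / (3 - γ) ≤ 1 - ∏ i ∈ C, F θ i := by
        intro C γ hγdef hγ0 hγ1 hC
        have hτ0 : 0 ≤ θ * (2 - γ) := by nlinarith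
        have hτle : θ * (2 - γ) ≤ ∑ i ∈ C.filter (fun i => θ ≤ v i), s i := by
          refine le_trans ?_ (hTau C θ hθ.le)
          rw [← hγdef]
          nlinarith
        have := hOne C θ (θ * (2 - γ)) hθ hτ0 hτle
        have heq : θ * (2 - γ) / (θ * (2 - γ) + θ) = (2 - γ) / (3 - γ) := by
          rw [show θ * (2 - γ) + θ = θ * (3 - γ) by ring]
          rw [mul_div_mul_left _ _ hθ.ne']
        linarith
      have ha := haux A γA hγA_def hγA0 hγA1 hSA2
      have hb := haux B γB hγB_def hγB0 hγB1 hSB2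
      have ha0 : (0:ℝ) ≤ (2 - γA) / (3 - γA) := by
        apply div_nonneg <;> linarith
      have hb0 : (0:ℝ) ≤ (2 - γB) / (3 - γB) := by
        apply div_nonneg <;> linarith
      have hprod13 : (1/3 : ℝ) ≤ (2 - γA) / (3 - γA) * ((2 - γB) / (3 - γB)) := by
        rw [div_mul_div_comm, le_div_iff₀ (by nlinarith)]
        nlinarith [mul_nonneg hγA0 hγB0]
      have := hMain A B hAB θ ((2 - γA) / (3 - γA)) ((2 - γB) / (3 - γB)) hθ ha0 hb0 ha hb
      have hstep : θ * (1/3) ≤ θ * ((2 - γA) / (3 - γA) * ((2 - γB) / (3 - γB))) :=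
        mul_le_mul_of_nonneg_left hprod13 hθ.le
      have hfin : OPT / 40 ≤ θ * (1/3 : ℝ) := by
        rw [hθ_def]
        linarith
      linarith
  exact hgoal
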